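/- Let G be a locally finite graph and let x and x' be adjacent vertices of G. Then for every N ≥ 1, Z_N(x) ≤ Σ_{k=1}^{N} Z_k(x') · Z_{N−k}(x') + Z_{N+1}(x'), where Z_0(y) := 1 for every vertex y. (Hammersley's inequality, obtained by decomposing self-avoiding paths from x according to the time of their visit to x'.) -/

import Mathlib

open Filter

namespace SAWGraph

/-- `Z_N(x)` : the number of self-avoiding paths of length `N` starting at `x`
in the graph `G`. -/
noncomputable def GZ {W : Type*} (G : SimpleGraph W) (N : ℕ) (x : W) : ℕ :=
  Nat.card {S : Fin (N + 1) → W // S 0 = x ∧ Function.Injective S ∧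
    ∀ n : Fin N, G.Adj (S n.castSucc) (S n.succ)}

section Aux

variable {W : Type*} {G : SimpleGraph W}

/-- The type of self-avoiding walks of length `N` from `x`. -/
def SAW (G : SimpleGraph W) (N : ℕ) (x : W) : Type _ :=
  {S : Fin (N + 1) → W // S 0 = x ∧ Function.Injective S ∧
    ∀ n : Fin N, G.Adj (S n.castSucc) (S n.succ)}

lemma GZ_eq (G : SimpleGraph W) (N : ℕ) (x : W) : GZ G N x = Nat.card (SAW G N x) := rfl

/-- Sets of paths (not necessarily self-avoiding) of given length from a vertex are finite. -/
lemma finite_pathSet (hlf : ∀ v, (G.neighborSet v).Finite) :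
    ∀ (N : ℕ) (x : W),
      {S : Fin (N + 1) → W | S 0 = x ∧
        ∀ n : Fin N, G.Adj (S n.castSucc) (S n.succ)}.Finite := by
  intro N
  induction N with
  | zero =>
    intro x
    apply Set.Finite.subset (Set.finite_singleton (fun _ : Fin 1 => x))
    rintro S ⟨h0, -⟩
    simp only [Set.mem_singleton_iff]
    funext i
    rw [Subsingleton.elim i 0, h0]
  | succ N ih =>
    intro x
    apply Set.Finite.subset
      (Set.Finite.biUnion (t := fun y => (fun (f : Fin (N + 1) → W) => (Fin.cons x f : Fin (N + 2) → W)) ''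
        {S : Fin (N + 1) → W | S 0 = y ∧ ∀ n : Fin N, G.Adj (S n.castSucc) (S n.succ)}) (hlf x) (fun y _ =>
        ((ih y).image (fun (f : Fin (N + 1) → W) => (Fin.cons x f : Fin (N + 2) → W)))))
    rintro S ⟨h0, hc⟩
    have hmem : S 1 ∈ G.neighborSet x := by
      have := hc 0
      simpa [h0] using this
    refine Set.mem_biUnion hmem ⟨S ∘ Fin.succ, ⟨rfl, ?_⟩, ?_⟩
    · intro n
      have := hc n.succ
      simpa only [Function.comp_apply, Fin.succ_castSucc] using this
    · funext i
      refine Fin.cases ?_ ?_ i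
      · simpa using h0.symm
      · intro j
        simp [Fin.cons_succ]

lemma finite_SAW (hlf : ∀ v, (G.neighborSet v).Finite) (N : ℕ) (x : W) :
    Finite (SAW G N x) := by
  have h := finite_pathSet hlf N x
  haveI := h.to_subtype
  apply Finite.of_injective
    (fun S : SAW G N x => (⟨S.1, S.2.1, S.2.2.2⟩ : {S : Fin (N + 1) → W | S 0 = x ∧
      ∀ n : Fin N, G.Adj (S n.castSucc) (S n.succ)}))
  intro a b hab
  rw [Subtype.mk.injEq] at hab
  exact Subtype.ext hab

variable {N : ℕ} {x x' : W}

private lemma adj_index {M : ℕ} (S : Fin M → W) {a b c d : Fin M}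
    (h : G.Adj (S a) (S b)) (hac : a.val = c.val) (hbd : b.val = d.val) :
    G.Adj (S c) (S d) := by
  rwa [Fin.ext hac, Fin.ext hbd] at h

/-- Reversed initial segment of a SAW visiting `x'` at time `i₀`. -/
def seg1 (S : SAW G N x) (i₀ : Fin (N + 1)) (hx : S.1 i₀ = x') : SAW G i₀.val x' := by
  refine ⟨fun j => S.1 ⟨i₀.val - j.val, Nat.lt_of_le_of_lt (Nat.sub_le _ _) i₀.isLt⟩,
    hx, ?_, ?_⟩
  · intro j j' hjj'
    have hv := congrArg Fin.val (S.2.2.1 hjj')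
    simp only at hv
    have h1 := j.isLt
    have h2 := j'.isLt
    exact Fin.ext (by omega)
  · intro n
    have hn := n.isLt
    have hi := i₀.isLt
    refine adj_index S.1
      ((S.2.2.2 ⟨i₀.val - n.val - 1, by omega⟩).symm) ?_ ?_
    · simp only [Fin.val_succ, Fin.coe_castSucc]
      omega
    · simp only [Fin.val_succ, Fin.coe_castSucc]
      omega

/-- Final segment of a SAW visiting `x'` at time `i₀`. -/
def seg2 (S : SAW G N x) (i₀ : Fin (N + 1)) (hx : S.1 i₀ = x') :
    SAW G (N - i₀.val) x' := by
  refine ⟨fun j => S.1 ⟨i₀.val + j.val, by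
      have h1 := j.isLt; have h2 := i₀.isLt; omega⟩, hx, ?_, ?_⟩
  · intro j j' hjj'
    have hv := congrArg Fin.val (S.2.2.1 hjj')
    simp only at hv
    exact Fin.ext (by omega)
  · intro n
    have hn := n.isLt
    have hi := i₀.isLt
    refine adj_index S.1 (S.2.2.2 ⟨i₀.val + n.val, by omega⟩) ?_ ?_
    · simp only [Fin.val_succ, Fin.coe_castSucc]
    · simp only [Fin.val_succ, Fin.coe_castSucc]
      omega

/-- Extension of a SAW avoiding `x'` by prepending `x'`. -/
def ext1 (S : SAW G N x) (hadj : G.Adj x x') (h : ∀ i, S.1 i ≠ x') :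
    SAW G (N + 1) x' := by
  refine ⟨Fin.cons x' S.1, Fin.cons_zero _ _, ?_, ?_⟩
  · intro i j hij
    rcases Fin.eq_zero_or_eq_succ i with rfl | ⟨i', rfl⟩ <;>
      rcases Fin.eq_zero_or_eq_succ j with rfl | ⟨j', rfl⟩
    · rfl
    · rw [Fin.cons_zero, Fin.cons_succ] at hij
      exact absurd hij.symm (h _)
    · rw [Fin.cons_succ, Fin.cons_zero] at hij
      exact absurd hij (h _)
    · rw [Fin.cons_succ, Fin.cons_succ] at hij
      exact congrArg Fin.succ (S.2.2.1 hij)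
  · intro n
    rcases Fin.eq_zero_or_eq_succ n with rfl | ⟨m, rfl⟩
    · rw [Fin.castSucc_zero, Fin.cons_zero, Fin.cons_succ, S.2.1]
      exact hadj.symm
    · rw [← Fin.succ_castSucc, Fin.cons_succ, Fin.cons_succ]
      exact S.2.2.2 m

lemma seg1_apply (S : SAW G N x) (i₀ : Fin (N + 1)) (hx : S.1 i₀ = x')
    (j : Fin (i₀.val + 1)) :
    (seg1 S i₀ hx).1 j =
      S.1 ⟨i₀.val - j.val, Nat.lt_of_le_of_lt (Nat.sub_le _ _) i₀.isLt⟩ := rfl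

lemma seg2_apply (S : SAW G N x) (i₀ : Fin (N + 1)) (hx : S.1 i₀ = x')
    (j : Fin (N - i₀.val + 1)) (hj : i₀.val + j.val < N + 1) :
    (seg2 S i₀ hx).1 j = S.1 ⟨i₀.val + j.val, hj⟩ := rfl

lemma ext1_apply (S : SAW G N x) (hadj : G.Adj x x') (h : ∀ i, S.1 i ≠ x') :
    (ext1 S hadj h).1 = Fin.cons x' S.1 := rfl

variable (G N x') in
/-- Target type for Hammersley's decomposition. -/
def HamT : Type _ :=
  (Σ k : {k : ℕ // k ∈ Finset.Icc 1 N}, SAW G k x' × SAW G (N - k) x') ⊕ SAW G (N + 1) x'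

open Classical in
/-- Hammersley's decomposition map. -/
noncomputable def ham (hadj : G.Adj x x') : SAW G N x → HamT G N x' := fun S =>
  if h : ∃ i : Fin (N + 1), S.1 i = x' then
    Sum.inl ⟨⟨(Classical.choose h).val, by
        rw [Finset.mem_Icc]
        refine ⟨?_, Nat.lt_succ_iff.mp (Classical.choose h).isLt⟩
        by_contra hk
        have h0 : Classical.choose h = 0 := Fin.ext (by simp only [Fin.val_zero]; omega)
        have hs := Classical.choose_spec h
        rw [h0, S.2.1] at hs
        exact (G.ne_of_adj hadj) hs⟩,
      (seg1 S (Classical.choose h) (Classical.choose_spec h),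
       seg2 S (Classical.choose h) (Classical.choose_spec h))⟩
  else
    Sum.inr (ext1 S hadj (fun i hi => h ⟨i, hi⟩))

/-- Reconstruction map. -/
def hamInv : HamT G N x' → (Fin (N + 1) → W) := fun t =>
  match t with
  | Sum.inl ⟨k, (T1, T2)⟩ => fun i =>
      if i.val ≤ k.1 then
        T1.1 ⟨k.1 - i.val, Nat.lt_succ_of_le (Nat.sub_le _ _)⟩
      else
        T2.1 ⟨i.val - k.1, Nat.lt_succ_of_le
          (Nat.sub_le_sub_right (Nat.lt_succ_iff.mp i.isLt) _)⟩
  | Sum.inr T1 => fun i => T1.1 i.succ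

lemma hamInv_ham (hadj : G.Adj x x') (S : SAW G N x) :
    hamInv (ham hadj S) = S.1 := by
  classical
  by_cases h : ∃ i : Fin (N + 1), S.1 i = x'
  · rw [ham]; erw [dif_pos h]
    set i₀ := Classical.choose h with hi₀
    funext i
    have hiN := i.isLt
    have hi₀N := i₀.isLt
    simp only [hamInv]
    by_cases hik : i.val ≤ i₀.val
    · rw [if_pos hik, seg1_apply]
      exact congrArg S.1 (Fin.ext (by simp only [Fin.val_mk]; omega))
    · rw [if_neg hik, seg2_apply _ _ _ _ (by omega)]
      exact congrArg S.1 (Fin.ext (by simp only [Fin.val_mk]; omega))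
  · rw [ham]; erw [dif_neg h]
    funext i
    simp only [hamInv, ext1_apply, Fin.cons_succ]

end Aux

/-- Hammersley's inequality: for adjacent vertices `x, x'` of a locally finite
graph `G` and `N ≥ 1`,
`Z_N(x) ≤ ∑_{k=1}^{N} Z_k(x')·Z_{N−k}(x') + Z_{N+1}(x')` (here `Z_0(y) = 1`). -/
theorem statement_6 {W : Type*} (G : SimpleGraph W) (hlf : ∀ v, (G.neighborSet v).Finite)
    (x x' : W) (hadj : G.Adj x x') (N : ℕ) (hN : 1 ≤ N) :
    GZ G N x ≤ (∑ k ∈ Finset.Icc 1 N, GZ G k x' * GZ G (N - k) x') + GZ G (N + 1) x' := by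
  classical
  haveI finP : ∀ (M : ℕ) (y : W), Finite (SAW G M y) := fun M y => finite_SAW hlf M y
  haveI : ∀ k : {k : ℕ // k ∈ Finset.Icc 1 N}, Finite (SAW G k x' × SAW G (N - k) x') :=
    fun k => by haveI := finP k x'; haveI := finP (N - k) x'; infer_instance
  haveI hTfin : Finite (HamT G N x') := by unfold HamT; infer_instance
  have hfinj : Function.Injective (ham (G := G) (N := N) (x := x) (x' := x') hadj) := by
    intro a b hab
    apply Subtype.ext
    rw [← hamInv_ham hadj a, ← hamInv_ham hadj b, hab]
  have hcard : GZ G N x ≤ Nat.card (HamT G N x') := by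
    rw [GZ_eq]
    exact Nat.card_le_card_of_injective _ hfinj
  refine le_trans hcard (le_of_eq ?_)
  unfold HamT
  haveI : ∀ k : {k : ℕ // k ∈ Finset.Icc 1 N},
      Fintype (SAW G k x' × SAW G (N - k) x') := fun k => Fintype.ofFinite _
  rw [Nat.card_sum]
  congr 1
  rw [Nat.card_eq_fintype_card, Fintype.card_sigma]
  rw [← Finset.sum_coe_sort (Finset.Icc 1 N) (fun k => GZ G k x' * GZ G (N - k) x')]
  congr 1
  funext k
  rw [← Nat.card_eq_fintype_card, Nat.card_prod, GZ_eq, GZ_eq]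

end SAWGraph
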